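/- For every d ≥ 1, every d×d complex density matrix ρ, and all Hermitian d×d complex matrices X and Y, the information-refined uncertainty relation U(ρ,X)·U(ρ,Y) ≥ (1/4)·|tr(ρ·[X,Y])|² holds, where [X,Y] = XY − YX. -/

import Mathlib

open Matrix
open scoped ComplexOrder

/-- The positive semidefinite square root, as `Matrix.PosSemidef.sqrt` was defined in the older Mathlib. -/
noncomputable def Matrix.PosSemidef.sqrt {n 𝕜 : Type*} [Fintype n] [DecidableEq n] [RCLike 𝕜]
    {A : Matrix n n 𝕜} (hA : A.PosSemidef) : Matrix n n 𝕜 :=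
  hA.1.eigenvectorUnitary.1 * diagonal ((↑) ∘ (√·) ∘ hA.1.eigenvalues) *
    (star hA.1.eigenvectorUnitary : Matrix n n 𝕜)

/-- Variance `V(ρ,X) = tr(ρX²) − (tr(ρX))²` (as a real number). -/
noncomputable def Vq {d : ℕ} (ρ X : Matrix (Fin d) (Fin d) ℂ) : ℝ :=
  (Matrix.trace (ρ * X ^ 2)).re - ((Matrix.trace (ρ * X)).re) ^ 2

/-- The centered observable `X₀ = X − tr(ρX)·1`. -/
noncomputable def Xc {d : ℕ} (ρ X : Matrix (Fin d) (Fin d) ℂ) : Matrix (Fin d) (Fin d) ℂ :=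
  X - Matrix.trace (ρ * X) • (1 : Matrix (Fin d) (Fin d) ℂ)

/-- Wigner–Yanase skew information `I(ρ,X) = tr(ρX²) − tr(√ρ X √ρ X)`. -/
noncomputable def Iq {d : ℕ} {ρ : Matrix (Fin d) (Fin d) ℂ} (hρ : ρ.PosSemidef)
    (X : Matrix (Fin d) (Fin d) ℂ) : ℝ :=
  (Matrix.trace (ρ * X ^ 2)).re - (Matrix.trace (hρ.sqrt * X * hρ.sqrt * X)).re

/-- Classical uncertainty `C(ρ,X) = tr(√ρ X₀ √ρ X₀)`. -/
noncomputable def Cq {d : ℕ} {ρ : Matrix (Fin d) (Fin d) ℂ} (hρ : ρ.PosSemidef)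
    (X : Matrix (Fin d) (Fin d) ℂ) : ℝ :=
  (Matrix.trace (hρ.sqrt * Xc ρ X * hρ.sqrt * Xc ρ X)).re

/-- `J(ρ,X) = (1/2)·tr(({√ρ, X₀})²)`. -/
noncomputable def Jq {d : ℕ} {ρ : Matrix (Fin d) (Fin d) ℂ} (hρ : ρ.PosSemidef)
    (X : Matrix (Fin d) (Fin d) ℂ) : ℝ :=
  (1 / 2) * (Matrix.trace ((hρ.sqrt * Xc ρ X + Xc ρ X * hρ.sqrt) ^ 2)).re

/-- Quantum uncertainty `U(ρ,X) = √(I(ρ,X)·J(ρ,X))`. -/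
noncomputable def Uq {d : ℕ} {ρ : Matrix (Fin d) (Fin d) ℂ} (hρ : ρ.PosSemidef)
    (X : Matrix (Fin d) (Fin d) ℂ) : ℝ :=
  Real.sqrt (Iq hρ X * Jq hρ X)


section aux
variable {d : ℕ}

lemma psd_sqrt_conjTranspose {ρ : Matrix (Fin d) (Fin d) ℂ} (hρ : ρ.PosSemidef) :
    (hρ.sqrt)ᴴ = hρ.sqrt := by
  simp [Matrix.PosSemidef.sqrt, conjTranspose_mul, diagonal_conjTranspose,
    Matrix.star_eq_conjTranspose, mul_assoc]
  have hs : star (Complex.ofReal ∘ (fun x => √x) ∘ hρ.1.eigenvalues) =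
      Complex.ofReal ∘ (fun x => √x) ∘ hρ.1.eigenvalues := by
    funext i
    simp only [Pi.star_apply, Function.comp_apply, Complex.star_def, Complex.conj_ofReal]
  rw [hs]

lemma psd_sqrt_mul_self {ρ : Matrix (Fin d) (Fin d) ℂ} (hρ : ρ.PosSemidef) :
    hρ.sqrt * hρ.sqrt = ρ := by
  have hU : (star hρ.1.eigenvectorUnitary : Matrix (Fin d) (Fin d) ℂ) *
      hρ.1.eigenvectorUnitary.1 = 1 := Unitary.coe_star_mul_self _
  have hD : diagonal (((↑) ∘ (√·) ∘ hρ.1.eigenvalues : Fin d → ℂ)) *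
      diagonal ((↑) ∘ (√·) ∘ hρ.1.eigenvalues) =
      diagonal (RCLike.ofReal ∘ hρ.1.eigenvalues) := by
    rw [diagonal_mul_diagonal]
    congr 1
    funext i
    simp only [Function.comp_apply]
    rw [← Complex.ofReal_mul, Real.mul_self_sqrt (hρ.eigenvalues_nonneg i)]
    rfl
  calc hρ.sqrt * hρ.sqrt
      = hρ.1.eigenvectorUnitary.1 * (diagonal ((↑) ∘ (√·) ∘ hρ.1.eigenvalues) *
          ((star hρ.1.eigenvectorUnitary : Matrix (Fin d) (Fin d) ℂ) *
            hρ.1.eigenvectorUnitary.1) * diagonal ((↑) ∘ (√·) ∘ hρ.1.eigenvalues)) *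
          (star hρ.1.eigenvectorUnitary : Matrix (Fin d) (Fin d) ℂ) := by
        simp only [Matrix.PosSemidef.sqrt, mul_assoc]
        rfl
    _ = ρ := by
        rw [hU, mul_one, hD]
        conv_rhs => rw [hρ.1.spectral_theorem]
        rfl

lemma trace_CS (A B : Matrix (Fin d) (Fin d) ℂ) :
    ‖Matrix.trace (Aᴴ * B)‖ ^ 2 ≤
      (Matrix.trace (Aᴴ * A)).re * (Matrix.trace (Bᴴ * B)).re := by
  let a : EuclideanSpace ℂ (Fin d × Fin d) := WithLp.toLp 2 (fun p : Fin d × Fin d => A p.2 p.1)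
  let b : EuclideanSpace ℂ (Fin d × Fin d) := WithLp.toLp 2 (fun p : Fin d × Fin d => B p.2 p.1)
  have hab : inner ℂ a b = Matrix.trace (Aᴴ * B) := by
    simp [PiLp.inner_apply, Matrix.trace, Matrix.diag, Matrix.mul_apply,
      Matrix.conjTranspose_apply, a, b, ← Finset.sum_product', RCLike.inner_apply]
    exact Finset.sum_congr rfl fun _ _ => mul_comm _ _
  have haa : (Matrix.trace (Aᴴ * A)).re = ‖a‖ ^ 2 := by
    have h1 : inner ℂ a a = Matrix.trace (Aᴴ * A) := by
      simp [PiLp.inner_apply, Matrix.trace, Matrix.diag, Matrix.mul_apply,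
        Matrix.conjTranspose_apply, a, ← Finset.sum_product', RCLike.inner_apply,
        -inner_self_eq_norm_sq_to_K]
      exact Finset.sum_congr rfl fun _ _ => mul_comm _ _
    rw [← h1, ← inner_self_eq_norm_sq (𝕜 := ℂ) a]; rfl
  have hbb : (Matrix.trace (Bᴴ * B)).re = ‖b‖ ^ 2 := by
    have h1 : inner ℂ b b = Matrix.trace (Bᴴ * B) := by
      simp [PiLp.inner_apply, Matrix.trace, Matrix.diag, Matrix.mul_apply,
        Matrix.conjTranspose_apply, b, ← Finset.sum_product', RCLike.inner_apply,
        -inner_self_eq_norm_sq_to_K]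
      exact Finset.sum_congr rfl fun _ _ => mul_comm _ _
    rw [← h1, ← inner_self_eq_norm_sq (𝕜 := ℂ) b]; rfl
  have h := norm_inner_le_norm (𝕜 := ℂ) a b
  rw [hab] at h
  have h2 : ‖Matrix.trace (Aᴴ * B)‖ ^ 2 ≤ (‖a‖ * ‖b‖) ^ 2 := by
    have he : ‖Matrix.trace (Aᴴ * B)‖ = ‖Matrix.trace (Aᴴ * B)‖ := rfl
    rw [he]
    exact pow_le_pow_left₀ (norm_nonneg _) h 2
  rw [haa, hbb]
  calc ‖Matrix.trace (Aᴴ * B)‖ ^ 2 ≤ (‖a‖ * ‖b‖) ^ 2 := h2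
    _ = ‖a‖ ^ 2 * ‖b‖ ^ 2 := by ring

lemma trace_self_re_nonneg (M : Matrix (Fin d) (Fin d) ℂ) :
    0 ≤ (Matrix.trace (Mᴴ * M)).re := by
  have h : Matrix.trace (Mᴴ * M) = ∑ i, ∑ j, (Complex.normSq (M j i) : ℂ) := by
    simp [Matrix.trace, Matrix.diag, Matrix.mul_apply, Matrix.conjTranspose_apply,
      Complex.normSq_eq_conj_mul_self]
  rw [h]
  simp only [Complex.re_sum, Complex.ofReal_re]
  exact Finset.sum_nonneg fun i _ => Finset.sum_nonneg fun j _ => Complex.normSq_nonneg _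

lemma tr_rot (A B C D : Matrix (Fin d) (Fin d) ℂ) :
    Matrix.trace (A * B * C * D) = Matrix.trace (B * C * D * A) := by
  rw [mul_assoc (A * B) C D, mul_assoc A B (C * D), Matrix.trace_mul_comm,
    ← mul_assoc B C D]

lemma tr_rot' (A B C D : Matrix (Fin d) (Fin d) ℂ) :
    Matrix.trace (A * B * C * D) = Matrix.trace (D * A * B * C) := by
  rw [Matrix.trace_mul_comm (A * B * C) D, ← mul_assoc, ← mul_assoc]

end aux

set_option maxHeartbeats 1000000 in
/-- Information-refined uncertainty relation:
U(ρ,X)·U(ρ,Y) ≥ (1/4)·|tr(ρ[X,Y])|². -/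
theorem refined_uncertainty (d : ℕ) (hd : 1 ≤ d) (ρ X Y : Matrix (Fin d) (Fin d) ℂ)
    (hρ : ρ.PosSemidef) (hρtr : Matrix.trace ρ = 1)
    (hX : X.IsHermitian) (hY : Y.IsHermitian) :
    Uq hρ X * Uq hρ Y ≥
      (1 / 4) * ‖Matrix.trace (ρ * (X * Y - Y * X))‖ ^ 2 := by
  set R := hρ.sqrt with hRdef
  have hR : Rᴴ = R := psd_sqrt_conjTranspose hρ
  have hRR : R * R = ρ := psd_sqrt_mul_self hρ
  have hreal : ∀ (Z : Matrix (Fin d) (Fin d) ℂ), Z.IsHermitian →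
      star (Matrix.trace (ρ * Z)) = Matrix.trace (ρ * Z) := by
    intro Z hZ
    rw [← Matrix.trace_conjTranspose, conjTranspose_mul, hZ.eq, hρ.1.eq,
      Matrix.trace_mul_comm]
  have hXcH : ∀ (Z : Matrix (Fin d) (Fin d) ℂ), Z.IsHermitian → (Xc ρ Z)ᴴ = Xc ρ Z := by
    intro Z hZ
    simp [Xc, conjTranspose_smul, hZ.eq, hreal Z hZ]
  have hBeq : ∀ (Z : Matrix (Fin d) (Fin d) ℂ),
      R * Xc ρ Z + Xc ρ Z * R = R * Z + Z * R - (2 * Matrix.trace (ρ * Z)) • R := by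
    intro Z
    simp only [Xc, mul_sub, sub_mul, Matrix.mul_smul, Matrix.smul_mul, mul_one, one_mul,
      two_mul, add_smul]
    abel
  -- skew information as a Gram term
  have hIgram : ∀ (Z : Matrix (Fin d) (Fin d) ℂ), Z.IsHermitian →
      Matrix.trace ((R * Z - Z * R)ᴴ * (R * Z - Z * R)) =
        2 * Matrix.trace (ρ * Z ^ 2) - 2 * Matrix.trace (R * Z * R * Z) := by
    intro Z hZ
    have hconj : (R * Z - Z * R)ᴴ = Z * R - R * Z := by
      simp [conjTranspose_sub, conjTranspose_mul, hZ.eq, hR]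
    rw [hconj]
    have hexp : (Z * R - R * Z) * (R * Z - Z * R)
        = Z * R * R * Z - Z * R * Z * R - R * Z * R * Z + R * Z * Z * R := by
      noncomm_ring
    rw [hexp]
    have h1 : Matrix.trace (Z * R * R * Z) = Matrix.trace (ρ * Z ^ 2) := by
      rw [tr_rot Z R R Z, pow_two, ← hRR, mul_assoc (R * R) Z Z]
    have h2 : Matrix.trace (Z * R * Z * R) = Matrix.trace (R * Z * R * Z) :=
      tr_rot' Z R Z R
    have h3 : Matrix.trace (R * Z * Z * R) = Matrix.trace (ρ * Z ^ 2) := by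
      rw [tr_rot' R Z Z R, pow_two, ← hRR, mul_assoc (R * R) Z Z]
    simp only [Matrix.trace_add, Matrix.trace_sub, h1, h2, h3]
    ring
  have hIq : ∀ (Z : Matrix (Fin d) (Fin d) ℂ), Z.IsHermitian →
      2 * Iq hρ Z = (Matrix.trace ((R * Z - Z * R)ᴴ * (R * Z - Z * R))).re := by
    intro Z hZ
    rw [hIgram Z hZ]
    simp only [Iq, ← hRdef, two_mul, Complex.sub_re, Complex.add_re]
    ring
  have hIq_nonneg : ∀ (Z : Matrix (Fin d) (Fin d) ℂ), Z.IsHermitian → 0 ≤ Iq hρ Z := by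
    intro Z hZ
    have h1 := trace_self_re_nonneg (R * Z - Z * R)
    have h2 := hIq Z hZ
    linarith
  have hJq : ∀ (Z : Matrix (Fin d) (Fin d) ℂ), Z.IsHermitian →
      2 * Jq hρ Z =
        (Matrix.trace ((R * Xc ρ Z + Xc ρ Z * R)ᴴ * (R * Xc ρ Z + Xc ρ Z * R))).re := by
    intro Z hZ
    have hBH : (R * Xc ρ Z + Xc ρ Z * R)ᴴ = R * Xc ρ Z + Xc ρ Z * R := by
      simp [conjTranspose_add, conjTranspose_mul, hXcH Z hZ, hR, add_comm]
    rw [hBH, ← pow_two]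
    simp only [Jq, ← hRdef]
    ring
  have hJq_nonneg : ∀ (Z : Matrix (Fin d) (Fin d) ℂ), Z.IsHermitian → 0 ≤ Jq hρ Z := by
    intro Z hZ
    have h1 := trace_self_re_nonneg (R * Xc ρ Z + Xc ρ Z * R)
    have h2 := hJq Z hZ
    linarith
  -- key identity
  have hkey : ∀ (Z W : Matrix (Fin d) (Fin d) ℂ),
      Matrix.trace ((R * Z - Z * R) * (R * Xc ρ W + Xc ρ W * R)) =
        Matrix.trace (ρ * (Z * W - W * Z)) := by
    intro Z W
    rw [hBeq W]
    have hAR : Matrix.trace ((R * Z - Z * R) * R) = 0 := by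
      rw [sub_mul, Matrix.trace_sub, Matrix.trace_mul_cycle Z R R, sub_self]
    have hsplit : (R * Z - Z * R) * (R * W + W * R - (2 * Matrix.trace (ρ * W)) • R)
        = (R * Z - Z * R) * (R * W + W * R)
            - (2 * Matrix.trace (ρ * W)) • ((R * Z - Z * R) * R) := by
      rw [mul_sub, Matrix.mul_smul]
    rw [hsplit, Matrix.trace_sub, Matrix.trace_smul, hAR, smul_zero, sub_zero]
    have hexp : (R * Z - Z * R) * (R * W + W * R)
        = R * Z * R * W + R * Z * W * R - Z * R * R * W - Z * R * W * R := by
      noncomm_ring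
    rw [hexp]
    have h1 : Matrix.trace (R * Z * W * R) = Matrix.trace (ρ * (Z * W)) := by
      rw [tr_rot' R Z W R, ← hRR, mul_assoc (R * R) Z W]
    have h2 : Matrix.trace (Z * R * R * W) = Matrix.trace (ρ * (W * Z)) := by
      rw [tr_rot Z R R W, ← hRR, mul_assoc (R * R) W Z]
    have h3 : Matrix.trace (Z * R * W * R) = Matrix.trace (R * Z * R * W) :=
      tr_rot' Z R W R
    have h4 : Matrix.trace (ρ * (Z * W - W * Z))
        = Matrix.trace (ρ * (Z * W)) - Matrix.trace (ρ * (W * Z)) := by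
      rw [mul_sub, Matrix.trace_sub]
    simp only [Matrix.trace_add, Matrix.trace_sub, h1, h2, h3, h4]
    ring
  -- Cauchy–Schwarz bound
  have hbound : ∀ (Z W : Matrix (Fin d) (Fin d) ℂ), Z.IsHermitian → W.IsHermitian →
      ‖Matrix.trace (ρ * (Z * W - W * Z))‖ ^ 2 ≤
        4 * (Iq hρ Z * Jq hρ W) := by
    intro Z W hZ hW
    have hAH : (R * Z - Z * R)ᴴ = -(R * Z - Z * R) := by
      rw [conjTranspose_sub, conjTranspose_mul, conjTranspose_mul, hZ.eq, hR, neg_sub]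
    have habs : ‖Matrix.trace (ρ * (Z * W - W * Z))‖
        = ‖Matrix.trace ((R * Z - Z * R)ᴴ * (R * Xc ρ W + Xc ρ W * R))‖ := by
      rw [hAH, neg_mul, Matrix.trace_neg, norm_neg, hkey Z W]
    have hCS := trace_CS (R * Z - Z * R) (R * Xc ρ W + Xc ρ W * R)
    rw [← habs] at hCS
    calc ‖Matrix.trace (ρ * (Z * W - W * Z))‖ ^ 2
        ≤ (Matrix.trace ((R * Z - Z * R)ᴴ * (R * Z - Z * R))).re *
            (Matrix.trace ((R * Xc ρ W + Xc ρ W * R)ᴴ * (R * Xc ρ W + Xc ρ W * R))).re :=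
          hCS
      _ = 4 * (Iq hρ Z * Jq hρ W) := by rw [← hIq Z hZ, ← hJq W hW]; ring
  have hXY := hbound X Y hX hY
  have hYX := hbound Y X hY hX
  have hcomm : ‖Matrix.trace (ρ * (Y * X - X * Y))‖
      = ‖Matrix.trace (ρ * (X * Y - Y * X))‖ := by
    have he : ρ * (Y * X - X * Y) = -(ρ * (X * Y - Y * X)) := by noncomm_ring
    rw [he, Matrix.trace_neg, norm_neg]
  rw [hcomm] at hYX
  set c := ‖Matrix.trace (ρ * (X * Y - Y * X))‖ ^ 2 with hc
  have hc0 : 0 ≤ c := by rw [hc]; positivity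
  have hIX := hIq_nonneg X hX
  have hJX := hJq_nonneg X hX
  have hIY := hIq_nonneg Y hY
  have hJY := hJq_nonneg Y hY
  rw [ge_iff_le]
  simp only [Uq]
  rw [← Real.sqrt_mul (mul_nonneg hIX hJX)]
  have hm : c * c ≤ 4 * (Iq hρ X * Jq hρ Y) * (4 * (Iq hρ Y * Jq hρ X)) :=
    mul_le_mul hXY hYX hc0 (by positivity)
  have hprod : (1 / 4 * c) ^ 2 ≤ Iq hρ X * Jq hρ X * (Iq hρ Y * Jq hρ Y) := by
    nlinarith [hm]
  calc (1 : ℝ) / 4 * c = Real.sqrt ((1 / 4 * c) ^ 2) := by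
        rw [Real.sqrt_sq (by positivity)]
    _ ≤ Real.sqrt (Iq hρ X * Jq hρ X * (Iq hρ Y * Jq hρ Y)) := Real.sqrt_le_sqrt hprod
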